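/- arXiv:2103.06635 — 8 statements merged into one kernel-verified Lean document; each statement's English description precedes it below -/
import Mathlib

section
/- Let F(x) and G(x) be formal power series related by G(x) = 1/(1 - x·F(x)). Then for every n ≥ 1, the n×n Hankel determinant of G equals the (n-1)×(n-1) shifted Hankel determinant H^{(1)}_{n-1}(F), i.e. H_n(G) = H^{(1)}_{n-1}(F), where H_0 is taken to be 1. -/
open PowerSeries Matrix

/-- The shifted Hankel determinant `H^{(k)}_n(F)`. -/
noncomputable def hankel {R : Type*} [CommRing R] (k n : ℕ) (F : PowerSeries R) : R :=
  Matrix.det (Matrix.of fun i j : Fin n => PowerSeries.coeff (k + (i : ℕ) + (j : ℕ)) F)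

theorem stmt1 {R : Type*} [CommRing R] (F G : PowerSeries R)
    (hG : G * (1 - PowerSeries.X * F) = 1) (n : ℕ) (hn : 1 ≤ n) :
    hankel 0 n G = hankel 1 (n - 1) F := by
  obtain ⟨m, rfl⟩ : ∃ m, n = m + 1 := ⟨n - 1, by omega⟩
  have hm : m + 1 - 1 = m := by omega
  rw [hm]
  set c : ℕ → R := fun k => coeff k (1 - X * F) with hc
  set g : ℕ → R := fun k => coeff k G with hg
  set f : ℕ → R := fun k => coeff k F with hf
  have hc0 : c 0 = 1 := by simp [hc]
  have hcs : ∀ k, c (k + 1) = - f k := by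
    intro k
    simp [hc, hf, coeff_succ_X_mul]
  -- general convolution formula
  have hconv : ∀ (A B : PowerSeries R) (N : ℕ),
      coeff N (A * B) = ∑ k ∈ Finset.range (N + 1), coeff k A * coeff (N - k) B := by
    intro A B N
    rw [coeff_mul, Finset.Nat.sum_antidiagonal_eq_sum_range_succ_mk]
  have key1 : ∀ N, (∑ k ∈ Finset.range (N + 1), g k * c (N - k)) = if N = 0 then (1 : R) else 0 := by
    intro N
    have h := congrArg (coeff N) hG
    rw [hconv, coeff_one] at h
    exact h
  -- row-operation lemma
  have u1 : ∀ i q : ℕ, (∑ p ∈ Finset.range (i + 1), g (p + q) * c (i - p))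
      = (if i + q = 0 then (1 : R) else 0) - ∑ k ∈ Finset.range q, g k * c (i + q - k) := by
    intro i q
    have h := key1 (i + q)
    rw [show i + q + 1 = q + (i + 1) by omega, Finset.sum_range_add] at h
    have h2 : (∑ p ∈ Finset.range (i + 1), g (q + p) * c (i + q - (q + p)))
        = ∑ p ∈ Finset.range (i + 1), g (p + q) * c (i - p) := by
      refine Finset.sum_congr rfl fun p _ => ?_
      rw [show q + p = p + q by omega, show i + q - (p + q) = i - p by omega]
    rw [h2] at h
    have : (if i + q = 0 then (1 : R) else 0) = if q + (i + 1) - 1 = 0 then (1:R) else 0 := by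
      congr 1
      simp only [eq_iff_iff]; omega
    linear_combination h
  have u0 : ∀ q : ℕ, (if q = 0 then (1 : R) else 0) - (∑ k ∈ Finset.range q, g k * c (q - k)) = g q := by
    intro q
    have h := key1 q
    rw [Finset.sum_range_succ, Nat.sub_self, hc0, mul_one] at h
    linear_combination -h
  -- the shifted Hankel values, for i ≥ 1
  have ENTRY : ∀ i j : ℕ, 1 ≤ i →
      (∑ q ∈ Finset.range (j + 1),
        (∑ p ∈ Finset.range (i + 1), g (p + q) * c (i - p)) * c (j - q))
      = if j = 0 then 0 else f (i + j - 1) := by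
    intro i j hi
    set Fi : PowerSeries R := PowerSeries.mk fun r => f (i + r) with hFi
    have wlem : ∀ q : ℕ, (∑ p ∈ Finset.range (i + 1), g (p + q) * c (i - p))
        = coeff q (X * (G * Fi)) := by
      intro q
      rw [u1 i q, if_neg (by omega)]
      cases q with
      | zero => simp
      | succ t =>
        rw [coeff_succ_X_mul, hconv]
        have : ∀ k ∈ Finset.range (t + 1), g k * c (i + (t + 1) - k)
            = -(g k * coeff (t - k) Fi) := by
          intro k hk
          have hk' : k ≤ t := by simpa [Nat.lt_succ_iff] using hk
          rw [show i + (t + 1) - k = (i + t - k) + 1 by omega, hcs, hFi, coeff_mk,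
            show i + (t - k) = i + t - k by omega]
          ring
        rw [Finset.sum_congr rfl this, Finset.sum_neg_distrib]
        ring
    calc (∑ q ∈ Finset.range (j + 1),
            (∑ p ∈ Finset.range (i + 1), g (p + q) * c (i - p)) * c (j - q))
        = ∑ q ∈ Finset.range (j + 1), coeff q (X * (G * Fi)) * c (j - q) := by
          refine Finset.sum_congr rfl fun q _ => by rw [wlem q]
      _ = coeff j ((X * (G * Fi)) * (1 - X * F)) := (hconv _ _ j).symm
      _ = coeff j (X * Fi) := by
          have : (X * (G * Fi)) * (1 - X * F) = (G * (1 - X * F)) * (X * Fi) := by ring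
          rw [this, hG, one_mul]
      _ = if j = 0 then 0 else f (i + j - 1) := by
          cases j with
          | zero => simp
          | succ t =>
            rw [coeff_succ_X_mul, hFi, coeff_mk, if_neg (by omega),
              show i + (t + 1) - 1 = i + t by omega]
  have ENTRY0 : ∀ j : ℕ,
      (∑ q ∈ Finset.range (j + 1),
        (∑ p ∈ Finset.range (0 + 1), g (p + q) * c (0 - p)) * c (j - q))
      = if j = 0 then (1 : R) else 0 := by
    intro j
    calc (∑ q ∈ Finset.range (j + 1),
            (∑ p ∈ Finset.range (0 + 1), g (p + q) * c (0 - p)) * c (j - q))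
        = ∑ q ∈ Finset.range (j + 1), g q * c (j - q) := by
          refine Finset.sum_congr rfl fun q _ => ?_
          rw [u1 0 q]
          simp only [Nat.zero_add]
          rw [u0 q]
      _ = if j = 0 then 1 else 0 := key1 j
  -- matrices
  set C : Matrix (Fin (m + 1)) (Fin (m + 1)) R :=
    Matrix.of (fun i j => if (j : ℕ) ≤ (i : ℕ) then c ((i : ℕ) - (j : ℕ)) else 0) with hC
  set HGm : Matrix (Fin (m + 1)) (Fin (m + 1)) R :=
    Matrix.of (fun i j => g ((i : ℕ) + (j : ℕ))) with hHGm
  set S : Matrix (Fin (m + 1)) (Fin (m + 1)) R :=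
    Matrix.of (fun i j => if (i : ℕ) = 0 then (if (j : ℕ) = 0 then (1 : R) else 0)
      else if (j : ℕ) = 0 then 0 else f ((i : ℕ) + (j : ℕ) - 1)) with hS
  have hCdet : C.det = 1 := by
    rw [Matrix.det_of_lowerTriangular C (fun i j hij => by
      rw [hC, Matrix.of_apply, if_neg (by exact Nat.not_le.2 hij)])]
    simp [hC, hc0]
  have hinner : ∀ i q : Fin (m + 1), (C * HGm) i q
      = ∑ p ∈ Finset.range ((i : ℕ) + 1), g (p + (q : ℕ)) * c ((i : ℕ) - p) := by
    intro i q
    rw [Matrix.mul_apply]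
    have step1 : (∑ p : Fin (m + 1), C i p * HGm p q)
        = ∑ p ∈ Finset.range (m + 1),
            g (p + (q : ℕ)) * (if p ≤ (i : ℕ) then c ((i : ℕ) - p) else 0) := by
      rw [← Fin.sum_univ_eq_sum_range
        (fun p => g (p + (q : ℕ)) * (if p ≤ (i : ℕ) then c ((i : ℕ) - p) else 0)) (m + 1)]
      exact Finset.sum_congr rfl fun p _ => mul_comm _ _
    rw [step1]
    rw [← Finset.sum_subset (Finset.range_subset_range.2 (show (i : ℕ) + 1 ≤ m + 1 by omega))
      (fun p _ hp => by
        rw [if_neg (by simp only [Finset.mem_range] at hp; omega), mul_zero])]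
    refine Finset.sum_congr rfl fun p hp => ?_
    rw [if_pos (by simp only [Finset.mem_range] at hp; omega)]
  have hfact : C * HGm * Cᵀ = S := by
    ext i j
    rw [Matrix.mul_apply]
    have step1 : (∑ q : Fin (m + 1), (C * HGm) i q * Cᵀ q j)
        = ∑ q ∈ Finset.range (m + 1),
            (∑ p ∈ Finset.range ((i : ℕ) + 1), g (p + q) * c ((i : ℕ) - p))
              * (if q ≤ (j : ℕ) then c ((j : ℕ) - q) else 0) := by
      rw [← Fin.sum_univ_eq_sum_range
        (fun q => (∑ p ∈ Finset.range ((i : ℕ) + 1), g (p + q) * c ((i : ℕ) - p))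
          * (if q ≤ (j : ℕ) then c ((j : ℕ) - q) else 0)) (m + 1)]
      exact Finset.sum_congr rfl fun q _ => by rw [hinner i q]; rfl
    rw [step1]
    rw [← Finset.sum_subset (Finset.range_subset_range.2 (show (j : ℕ) + 1 ≤ m + 1 by omega))
      (fun q _ hq => by
        rw [if_neg (by simp only [Finset.mem_range] at hq; omega), mul_zero])]
    have step2 : (∑ q ∈ Finset.range ((j : ℕ) + 1),
        (∑ p ∈ Finset.range ((i : ℕ) + 1), g (p + q) * c ((i : ℕ) - p))
          * (if q ≤ (j : ℕ) then c ((j : ℕ) - q) else 0))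
        = ∑ q ∈ Finset.range ((j : ℕ) + 1),
          (∑ p ∈ Finset.range ((i : ℕ) + 1), g (p + q) * c ((i : ℕ) - p)) * c ((j : ℕ) - q) := by
      refine Finset.sum_congr rfl fun q hq => ?_
      rw [if_pos (by simp only [Finset.mem_range] at hq; omega)]
    rw [step2]
    rcases Nat.eq_zero_or_pos (i : ℕ) with hi | hi
    · rw [hS, Matrix.of_apply, if_pos hi, ← ENTRY0 (j : ℕ)]
      rw [hi]
    · rw [hS, Matrix.of_apply, if_neg (by omega), ENTRY (i : ℕ) (j : ℕ) hi]
  have hdetHG : HGm.det = S.det := by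
    rw [← hfact, Matrix.det_mul, Matrix.det_mul, Matrix.det_transpose, hCdet, one_mul, mul_one]
  have hdetS : S.det = hankel 1 m F := by
    rw [Matrix.det_succ_column_zero]
    rw [Finset.sum_eq_single (0 : Fin (m + 1))]
    · have h00 : S 0 0 = 1 := by simp [hS]
      rw [h00]
      have hsub : (S.submatrix (0 : Fin (m + 1)).succAbove Fin.succ)
          = Matrix.of fun i j : Fin m => coeff (1 + (i : ℕ) + (j : ℕ)) F := by
        ext i j
        simp only [Matrix.submatrix_apply, Fin.succAbove_zero, hS, Matrix.of_apply]
        rw [if_neg (by simp [Fin.val_succ]), if_neg (by simp [Fin.val_succ])]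
        rw [hf]
        congr 1
        simp [Fin.val_succ]
        omega
      rw [hsub]
      simp [hankel]
    · intro b _ hb
      have : S b 0 = 0 := by
        have hb' : (b : ℕ) ≠ 0 := fun h => hb (Fin.ext (h.trans (Fin.val_zero (m + 1)).symm))
        rw [hS, Matrix.of_apply, if_neg hb']
        simp
      rw [this]; ring
    · intro h; exact absurd (Finset.mem_univ _) h
  have hdetHG' : hankel 0 (m + 1) G = HGm.det := by
    unfold hankel
    congr 1
    ext i j
    rw [hHGm, Matrix.of_apply, Matrix.of_apply, hg, Nat.zero_add]
  rw [hdetHG', hdetHG, hdetS]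
end

section
/- Let F(x) and G(x) be formal power series with G(x) = 1/(1 - x·F(x)). Then for every n ≥ 1, the shifted Hankel determinant H^{(1)}_n(G) equals the Hankel determinant H_n(F). -/
open PowerSeries

theorem stmt3 {R : Type*} [CommRing R] (F G : PowerSeries R)
    (hG : G * (1 - PowerSeries.X * F) = 1) (n : ℕ) (hn : 1 ≤ n) :
    hankel 1 n G = hankel 0 n F := by
  classical
  set f : ℕ → R := fun m => PowerSeries.coeff m F with hf
  set g : ℕ → R := fun m => PowerSeries.coeff m G with hgdef
  set c : ℕ → R := fun m => PowerSeries.coeff m (1 - PowerSeries.X * F) with hcdef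
  have hg0 : g 0 = 1 := by
    have := congrArg (PowerSeries.constantCoeff) hG
    simp at this
    simpa [hgdef, PowerSeries.coeff_zero_eq_constantCoeff] using this
  have hc0 : c 0 = 1 := by
    simp [hcdef, PowerSeries.coeff_zero_eq_constantCoeff]
  have hc1 : ∀ m : ℕ, c (m + 1) = -f m := by
    intro m
    simp [hcdef, hf, PowerSeries.coeff_one, PowerSeries.coeff_succ_X_mul]
  have hconv : ∀ N : ℕ, ∑ a ∈ Finset.range (N + 1), g a * c (N - a)
      = (if N = 0 then (1 : R) else 0) := by
    intro N
    have := congrArg (PowerSeries.coeff N) hG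
    rw [PowerSeries.coeff_mul, Finset.Nat.sum_antidiagonal_eq_sum_range_succ_mk] at this
    simpa only [PowerSeries.coeff_one] using this
  -- the key convolution identity
  have key : ∀ i k : ℕ, ∑ j ∈ Finset.range (k + 1), g (1 + i + j) * c (k - j)
      = ∑ t ∈ Finset.range (i + 1), g (i - t) * f (t + k) := by
    intro i k
    have h0 := hconv (i + k + 1)
    rw [show i + k + 1 + 1 = (i + 1) + (k + 1) by ring, Finset.sum_range_add] at h0
    have h1 : ∀ a ∈ Finset.range (i + 1), g a * c (i + k + 1 - a) = -(g a * f (i + k - a)) := by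
      intro a ha
      simp only [Finset.mem_range] at ha
      have : i + k + 1 - a = (i + k - a) + 1 := by omega
      rw [this, hc1, mul_neg]
    have h2 : ∀ j ∈ Finset.range (k + 1), g (i + 1 + j) * c (i + k + 1 - (i + 1 + j))
        = g (1 + i + j) * c (k - j) := by
      intro j hj
      simp only [Finset.mem_range] at hj
      have e1 : i + k + 1 - (i + 1 + j) = k - j := by omega
      have e2 : i + 1 + j = 1 + i + j := by ring
      rw [e1, e2]
    rw [Finset.sum_congr rfl h1, Finset.sum_congr rfl h2, Finset.sum_neg_distrib] at h0
    have h3 : ∑ t ∈ Finset.range (i + 1), g (i - t) * f (t + k)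
        = ∑ a ∈ Finset.range (i + 1), g a * f (i + k - a) := by
      rw [← Finset.sum_range_reflect]
      refine Finset.sum_congr rfl ?_
      intro a ha
      simp only [Finset.mem_range] at ha
      have e1 : i - (i + 1 - 1 - a) = a := by omega
      have e2 : i + 1 - 1 - a + k = i + k - a := by omega
      rw [e1, e2]
    rw [h3]
    have : ¬ (i + k + 1 = 0) := by omega
    simp only [this, if_false] at h0
    linear_combination h0
  -- matrices
  set A : Matrix (Fin n) (Fin n) R :=
    Matrix.of (fun i t : Fin n => if (t : ℕ) ≤ (i : ℕ) then g ((i : ℕ) - (t : ℕ)) else 0) with hA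
  set B : Matrix (Fin n) (Fin n) R :=
    Matrix.of (fun j k : Fin n => if (j : ℕ) ≤ (k : ℕ) then c ((k : ℕ) - (j : ℕ)) else 0) with hB
  have sum_cut : ∀ (m : ℕ), m < n → ∀ (h : ℕ → R),
      (∑ j ∈ Finset.range n, if j ≤ m then h j else 0) = ∑ j ∈ Finset.range (m + 1), h j := by
    intro m hm h
    rw [← Finset.sum_filter]
    congr 1
    ext j
    simp only [Finset.mem_filter, Finset.mem_range]
    omega
  have hmul : (Matrix.of fun i j : Fin n => PowerSeries.coeff (1 + (i : ℕ) + (j : ℕ)) G) * B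
      = A * (Matrix.of fun i j : Fin n => PowerSeries.coeff (0 + (i : ℕ) + (j : ℕ)) F) := by
    ext i k
    rw [Matrix.mul_apply, Matrix.mul_apply]
    simp only [Matrix.of_apply, hA, hB, mul_ite, mul_zero, ite_mul, zero_mul]
    rw [Fin.sum_univ_eq_sum_range (fun j => if j ≤ (k : ℕ) then g (1 + i + j) * c (k - j) else 0),
      Fin.sum_univ_eq_sum_range (fun t => if t ≤ (i : ℕ) then g (i - t) * f (0 + t + k) else 0)]
    rw [sum_cut _ k.2, sum_cut _ i.2]
    simpa [hgdef, hcdef, hf] using key i k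
  have hdetB : B.det = 1 := by
    rw [Matrix.det_of_upperTriangular]
    · simp [hB, hc0]
    · intro i j hij
      simp only [hB, Matrix.of_apply]
      rw [if_neg]
      exact Nat.not_le.mpr hij
  have hdetA : A.det = 1 := by
    rw [Matrix.det_of_lowerTriangular]
    · simp [hA, hg0]
    · intro i j hij
      simp only [hA, Matrix.of_apply]
      rw [if_neg]
      exact Nat.not_le.mpr hij
  have := congrArg Matrix.det hmul
  rw [Matrix.det_mul, Matrix.det_mul, hdetB, hdetA, mul_one, one_mul] at this
  simpa [hankel] using this
end

section
/- Let F(x) and G(x) be formal power series with G(x) = 1/(1 + x - x·F(x)). Then for every n ≥ 1, the shifted Hankel determinant H^{(1)}_n(G) equals the Hankel determinant H_n(-1+F). -/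
open PowerSeries

theorem stmt4 {R : Type*} [CommRing R] (F G : PowerSeries R)
    (hG : G * (1 + PowerSeries.X - PowerSeries.X * F) = 1) (n : ℕ) (hn : 1 ≤ n) :
    hankel 1 n G = hankel 0 n (F - 1) := by
  classical
  set a : ℕ → R := fun m => coeff m (F - 1) with ha
  set g : ℕ → R := fun m => coeff m G with hg
  have hg0 : g 0 = 1 := by
    have := congrArg constantCoeff hG
    simp only [map_mul, map_sub, map_add, map_one, constantCoeff_X, mul_zero, sub_zero,
      add_zero, mul_one] at this
    simpa [hg, coeff_zero_eq_constantCoeff] using this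
  have hGeq : G = 1 + X * (G * (F - 1)) := by linear_combination hG
  have hrec : ∀ s : ℕ, g (s + 1) = ∑ p ∈ Finset.range (s + 1), g p * a (s - p) := by
    intro s
    show coeff (s + 1) G = _
    conv_lhs => rw [hGeq]
    rw [map_add, PowerSeries.coeff_succ_X_mul, PowerSeries.coeff_mul,
      Finset.Nat.sum_antidiagonal_eq_sum_range_succ_mk]
    simp [hg, ha, PowerSeries.coeff_one]
  -- the matrices
  set M : Matrix (Fin n) (Fin n) R := Matrix.of fun i j => g (1 + (i : ℕ) + (j : ℕ)) with hM
  set T : Matrix (Fin n) (Fin n) R :=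
    Matrix.of fun i l => if (l : ℕ) ≤ (i : ℕ) then g ((i : ℕ) - (l : ℕ)) else 0 with hT
  set Hm : Matrix (Fin n) (Fin n) R := Matrix.of fun l j => a ((l : ℕ) + (j : ℕ)) with hHm
  set N : Matrix (Fin n) (Fin n) R := Matrix.of fun t j =>
    if t = j then 1 else if (t : ℕ) < (j : ℕ) then -(a ((j : ℕ) - 1 - (t : ℕ))) else 0 with hN
  -- the entrywise identity
  have entry : ∀ i j : Fin n, g (1 + (i : ℕ) + (j : ℕ)) =
      (∑ l : Fin n, (if (l : ℕ) ≤ (i : ℕ) then g ((i : ℕ) - (l : ℕ)) else 0)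
        * a ((l : ℕ) + (j : ℕ)))
      + ∑ t : Fin n, g (1 + (i : ℕ) + (t : ℕ))
        * (if (t : ℕ) < (j : ℕ) then a ((j : ℕ) - 1 - (t : ℕ)) else 0) := by
    intro i j
    have h1 : 1 + (i : ℕ) + (j : ℕ) = ((i : ℕ) + (j : ℕ)) + 1 := by omega
    rw [h1, hrec ((i : ℕ) + (j : ℕ))]
    -- split range sum
    have hsplit : ∑ p ∈ Finset.range ((i : ℕ) + (j : ℕ) + 1), g p * a ((i : ℕ) + (j : ℕ) - p)
        = (∑ p ∈ Finset.range ((i : ℕ) + 1), g p * a ((i : ℕ) + (j : ℕ) - p))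
          + ∑ p ∈ Finset.Ico ((i : ℕ) + 1) ((i : ℕ) + (j : ℕ) + 1),
              g p * a ((i : ℕ) + (j : ℕ) - p) := by
      rw [Finset.range_eq_Ico, Finset.range_eq_Ico]
      exact (Finset.sum_Ico_consecutive (fun p => g p * a ((i : ℕ) + (j : ℕ) - p)) (m := 0) (n := (i : ℕ) + 1) (k := (i : ℕ) + (j : ℕ) + 1) (Nat.zero_le _) (by omega)).symm
    rw [hsplit]
    congr 1
    · -- first part
      have hrefl : ∑ p ∈ Finset.range ((i : ℕ) + 1), g p * a ((i : ℕ) + (j : ℕ) - p)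
          = ∑ l ∈ Finset.range ((i : ℕ) + 1), g ((i : ℕ) - l) * a (l + (j : ℕ)) := by
        rw [← Finset.sum_range_reflect]
        refine Finset.sum_congr rfl fun l hl => ?_
        rw [Finset.mem_range] at hl
        congr 1 <;> congr 1 <;> omega
      rw [hrefl]
      rw [Fin.sum_univ_eq_sum_range
        (fun l => (if l ≤ (i : ℕ) then g ((i : ℕ) - l) else 0) * a (l + (j : ℕ)))]
      rw [← Finset.sum_filter_of_ne (f := fun l => (if l ≤ (i : ℕ) then g ((i : ℕ) - l) else 0)
        * a (l + (j : ℕ))) (p := fun l => l ≤ (i : ℕ)) (by intro x _ h; by_contra hc; simp [hc] at h)]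
      have hfilt : (Finset.range n).filter (fun l => l ≤ (i : ℕ)) = Finset.range ((i : ℕ) + 1) := by
        ext l
        simp only [Finset.mem_filter, Finset.mem_range]
        have := i.isLt
        omega
      rw [hfilt]
      refine Finset.sum_congr rfl fun l hl => ?_
      rw [Finset.mem_range] at hl
      rw [if_pos (by omega)]
    · -- second part
      rw [Finset.sum_Ico_eq_sum_range]
      have hlen : (i : ℕ) + (j : ℕ) + 1 - ((i : ℕ) + 1) = (j : ℕ) := by omega
      rw [hlen]
      have hstep : ∑ t ∈ Finset.range (j : ℕ), g ((i : ℕ) + 1 + t)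
            * a ((i : ℕ) + (j : ℕ) - ((i : ℕ) + 1 + t))
          = ∑ t ∈ Finset.range (j : ℕ), g (1 + (i : ℕ) + t) * a ((j : ℕ) - 1 - t) := by
        refine Finset.sum_congr rfl fun t ht => ?_
        rw [Finset.mem_range] at ht
        congr 1 <;> congr 1 <;> omega
      rw [hstep]
      rw [Fin.sum_univ_eq_sum_range
        (fun t => g (1 + (i : ℕ) + t) * (if t < (j : ℕ) then a ((j : ℕ) - 1 - t) else 0))]
      rw [← Finset.sum_filter_of_ne (f := fun t => g (1 + (i : ℕ) + t)
        * (if t < (j : ℕ) then a ((j : ℕ) - 1 - t) else 0)) (p := fun t => t < (j : ℕ))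
        (by intro x _ h; by_contra hc; simp [hc] at h)]
      have hfilt : (Finset.range n).filter (fun t => t < (j : ℕ)) = Finset.range (j : ℕ) := by
        ext t
        simp only [Finset.mem_filter, Finset.mem_range]
        have := j.isLt
        omega
      rw [hfilt]
      refine Finset.sum_congr rfl fun t ht => ?_
      rw [Finset.mem_range] at ht
      rw [if_pos ht]
  -- matrix identity
  have key : M * N = T * Hm := by
    ext i j
    rw [Matrix.mul_apply, Matrix.mul_apply]
    have hNsplit : ∀ t : Fin n, N t j = (if t = j then (1 : R) else 0)
        + (if (t : ℕ) < (j : ℕ) then -(a ((j : ℕ) - 1 - (t : ℕ))) else 0) := by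
      intro t
      simp only [hN, Matrix.of_apply]
      by_cases h1 : t = j
      · subst h1; simp
      · simp [h1]
    calc ∑ t : Fin n, M i t * N t j
        = ∑ t : Fin n, (M i t * (if t = j then (1 : R) else 0)
            + M i t * (if (t : ℕ) < (j : ℕ) then -(a ((j : ℕ) - 1 - (t : ℕ))) else 0)) := by
          refine Finset.sum_congr rfl fun t _ => ?_
          rw [hNsplit t, mul_add]
      _ = M i j - ∑ t : Fin n, M i t
            * (if (t : ℕ) < (j : ℕ) then a ((j : ℕ) - 1 - (t : ℕ)) else 0) := by
          rw [Finset.sum_add_distrib, sub_eq_add_neg]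
          congr 1
          · simp [mul_ite, Finset.sum_ite_eq']
          · rw [← Finset.sum_neg_distrib]
            refine Finset.sum_congr rfl fun t _ => ?_
            by_cases h : (t : ℕ) < (j : ℕ) <;> simp [h]
      _ = ∑ l : Fin n, T i l * Hm l j := by
          have := entry i j
          simp only [hM, hT, hHm, Matrix.of_apply]
          simp only [hM, Matrix.of_apply] at *
          linear_combination this
  -- determinants
  have hdN : N.det = 1 := by
    have htri : N.BlockTriangular id := by
      intro s t hst
      simp only [id] at hst
      have h1 : s ≠ t := by intro h; subst h; exact lt_irrefl _ hst
      have h2 : ¬ ((s : ℕ) < (t : ℕ)) := by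
        simp only [not_lt]
        exact le_of_lt (Fin.lt_iff_val_lt_val.mp hst)
      simp only [hN, Matrix.of_apply]
      rw [if_neg h1, if_neg h2]
    rw [Matrix.det_of_upperTriangular htri]
    refine Finset.prod_eq_one fun t _ => by simp [hN]
  have hdT : T.det = 1 := by
    have htri : T.BlockTriangular OrderDual.toDual := by
      intro s t hst
      have h2 : ¬ ((t : ℕ) ≤ (s : ℕ)) := by
        simp only [not_le]
        exact Fin.lt_iff_val_lt_val.mp hst
      simp only [hT, Matrix.of_apply]
      rw [if_neg h2]
    rw [Matrix.det_of_lowerTriangular T htri]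
    refine Finset.prod_eq_one fun t _ => by simp [hT, hg0]
  have hdet : M.det = Hm.det := by
    have := congrArg Matrix.det key
    rw [Matrix.det_mul, Matrix.det_mul, hdN, hdT, mul_one, one_mul] at this
    exact this
  have e1 : hankel 1 n G = M.det := rfl
  have e2 : hankel 0 n (F - 1) = Hm.det := by
    unfold hankel
    congr 1
    ext l j
    simp [hHm, ha]
  rw [e1, e2, hdet]
end

section
/- Let F(x) and G(x) be formal power series satisfying -1 + G(x) = x/(1 - x·F(x)). Then for every n ≥ 2, H_n(-1+G) = -H^{(2)}_{n-2}(F). -/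
open PowerSeries Finset

theorem stmt5 {R : Type*} [CommRing R] (F G : PowerSeries R)
    (hG : (G - 1) * (1 - PowerSeries.X * F) = PowerSeries.X) (n : ℕ) (hn : 2 ≤ n) :
    hankel 0 n (G - 1) = - hankel 2 (n - 2) F := by
  obtain ⟨m, rfl⟩ : ∃ m, n = 2 + m := ⟨n - 2, by omega⟩
  have hnm : 2 + m - 2 = m := by omega
  rw [hnm]
  set gc : ℕ → R := fun i => coeff i (G - 1) with hgc
  set fc : ℕ → R := fun i => coeff i F with hfc
  have heq : G - 1 = PowerSeries.X + PowerSeries.X * (F * (G - 1)) := by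
    linear_combination hG
  have hg0 : gc 0 = 0 := by
    have h1 := congrArg (coeff 0) heq
    rw [hgc]
    simp only [map_add, PowerSeries.coeff_zero_eq_constantCoeff, map_mul,
      PowerSeries.constantCoeff_X, zero_mul, add_zero] at h1 ⊢
    rw [h1]
  have hrec : ∀ u : ℕ, gc (u + 1) =
      (if u = 0 then 1 else 0) + ∑ t ∈ range (u + 1), fc t * gc (u - t) := by
    intro u
    have h1 := congrArg (coeff (u + 1)) heq
    rw [map_add, PowerSeries.coeff_succ_X_mul, PowerSeries.coeff_X, PowerSeries.coeff_mul,
      Finset.Nat.sum_antidiagonal_eq_sum_range_succ_mk] at h1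
    have h2 : (if u + 1 = 1 then (1:R) else 0) = if u = 0 then 1 else 0 := by
      simp
    rw [hgc, hfc]
    simp only []
    rw [h1, h2]
  have hg1 : gc 1 = 1 := by
    have := hrec 0
    simpa [hg0] using this
  -- the Hankel matrix of g and the column-operation matrix
  set A : Matrix (Fin (2+m)) (Fin (2+m)) R := Matrix.of (fun i j => gc ((i:ℕ) + j)) with hA
  set T : Matrix (Fin (2+m)) (Fin (2+m)) R :=
    Matrix.of (fun t j => if (t:ℕ) = (j:ℕ) then (1:R)
      else if (t:ℕ) < (j:ℕ) then -fc ((j:ℕ) - 1 - t) else 0) with hT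
  have hdetT : T.det = 1 := by
    rw [Matrix.det_of_upperTriangular]
    · simp [hT]
    · intro i j hij
      simp only [id_eq] at hij
      have h1 : ¬ ((i:ℕ) = (j:ℕ)) := by
        intro h; exact absurd (Fin.ext h) (ne_of_gt hij)
      have h2 : ¬ ((i:ℕ) < (j:ℕ)) := by
        have := (Fin.lt_def.mp hij); omega
      rw [hT]
      simp only [Matrix.of_apply]
      rw [if_neg h1, if_neg h2]
  have hB : ∀ i j : Fin (2+m), (A * T) i j =
      if (j:ℕ) = 0 then gc i
      else (if (i:ℕ) + j = 1 then 1 else 0) +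
        ∑ s ∈ range i, fc ((j:ℕ) + s) * gc ((i:ℕ) - 1 - s) := by
    intro i j
    rw [Matrix.mul_apply]
    have e1 : ∀ t : Fin (2+m), A i t * T t j =
        (fun t : ℕ => gc ((i:ℕ) + t) * (if t = (j:ℕ) then (1:R)
          else if t < (j:ℕ) then -fc ((j:ℕ) - 1 - t) else 0)) (t:ℕ) := fun t => rfl
    rw [Finset.sum_congr rfl (fun t _ => e1 t),
      Fin.sum_univ_eq_sum_range (fun t : ℕ => gc ((i:ℕ) + t) * (if t = (j:ℕ) then (1:R)
        else if t < (j:ℕ) then -fc ((j:ℕ) - 1 - t) else 0)) (2+m)]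
    have hsub : ∑ t ∈ range (2+m), gc ((i:ℕ)+t) * (if t = (j:ℕ) then (1:R)
          else if t < (j:ℕ) then -fc ((j:ℕ)-1-t) else 0)
        = ∑ t ∈ range ((j:ℕ)+1), gc ((i:ℕ)+t) * (if t = (j:ℕ) then (1:R)
          else if t < (j:ℕ) then -fc ((j:ℕ)-1-t) else 0) := by
      refine (Finset.sum_subset ?_ ?_).symm
      · intro t ht
        simp only [mem_range] at ht ⊢
        have := j.isLt; omega
      · intro t ht hnt
        simp only [mem_range] at ht hnt
        have h1 : ¬ (t = (j:ℕ)) := by omega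
        have h2 : ¬ (t < (j:ℕ)) := by omega
        simp [h1, h2]
    rw [hsub, Finset.sum_range_succ, if_pos rfl, mul_one]
    have hsum2 : ∑ t ∈ range (j:ℕ), gc ((i:ℕ)+t) * (if t = (j:ℕ) then (1:R)
          else if t < (j:ℕ) then -fc ((j:ℕ)-1-t) else 0)
        = ∑ t ∈ range (j:ℕ), gc ((i:ℕ)+t) * (-fc ((j:ℕ)-1-t)) := by
      refine Finset.sum_congr rfl fun t ht => ?_
      simp only [mem_range] at ht
      rw [if_neg (by omega), if_pos ht]
    rw [hsum2]
    rcases Nat.eq_zero_or_pos (j:ℕ) with hj | hj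
    · rw [hj, if_pos rfl]
      simp
    · obtain ⟨k, hk⟩ : ∃ k, (j:ℕ) = k + 1 := ⟨(j:ℕ) - 1, by omega⟩
      rw [hk, if_neg (by omega)]
      have hr := hrec ((i:ℕ) + k)
      rw [show (i:ℕ) + k + 1 = (k+1) + (i:ℕ) from by omega] at hr
      rw [Finset.sum_range_add] at hr
      have hrefl : ∑ t ∈ range (k+1), fc t * gc ((i:ℕ) + k - t)
          = ∑ t ∈ range (k+1), fc ((k+1) - 1 - t) * gc ((i:ℕ) + k - ((k+1) - 1 - t)) :=
        (Finset.sum_range_reflect (fun t => fc t * gc ((i:ℕ) + k - t)) (k+1)).symm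
      rw [hrefl] at hr
      have hrw1 : ∑ t ∈ range (k+1), fc ((k+1) - 1 - t) * gc ((i:ℕ) + k - ((k+1) - 1 - t))
          = ∑ t ∈ range (k+1), fc (k - t) * gc ((i:ℕ) + t) := by
        refine Finset.sum_congr rfl fun t ht => ?_
        simp only [mem_range] at ht
        rw [show (i:ℕ) + k - ((k+1) - 1 - t) = (i:ℕ) + t from by omega,
          show (k+1) - 1 - t = k - t from by omega]
      rw [hrw1] at hr
      have hrw2 : ∑ s ∈ range (i:ℕ), fc ((k+1) + s) * gc ((i:ℕ) + k - ((k+1) + s))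
          = ∑ s ∈ range (i:ℕ), fc ((k+1) + s) * gc ((i:ℕ) - 1 - s) := by
        refine Finset.sum_congr rfl fun s hs => ?_
        congr 2
        omega
      rw [hrw2] at hr
      have hneg : ∑ t ∈ range (k+1), gc ((i:ℕ)+t) * (-fc ((k+1)-1-t))
          = - ∑ t ∈ range (k+1), fc (k - t) * gc ((i:ℕ) + t) := by
        rw [← Finset.sum_neg_distrib]
        refine Finset.sum_congr rfl fun t ht => ?_
        have : (k+1) - 1 - t = k - t := by omega
        rw [this]; ring
      rw [hneg]
      have hδ : (if (i:ℕ) + k = 0 then (1:R) else 0)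
          = if (k+1) + (i:ℕ) = 1 then 1 else 0 := if_congr (by omega) rfl rfl
      rw [hδ] at hr
      rw [show (i:ℕ) + (k+1) = (k+1) + (i:ℕ) from by omega]
      linear_combination hr
  -- block decomposition
  set e : Fin 2 ⊕ Fin m ≃ Fin (2 + m) := finSumFinEquiv with he
  have hcl : ∀ i : Fin 2, ((e (Sum.inl i)) : ℕ) = i := by
    intro i; simp [he, finSumFinEquiv_apply_left]
  have hcr : ∀ p : Fin m, ((e (Sum.inr p)) : ℕ) = 2 + p := by
    intro p; simp [he, finSumFinEquiv_apply_right]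
  set L : Matrix (Fin m) (Fin m) R := Matrix.of (fun p s => gc ((p:ℕ) + 1 - s)) with hL
  set F2 : Matrix (Fin m) (Fin m) R := Matrix.of (fun s q => fc (2 + (s:ℕ) + q)) with hF2
  set C1 : Matrix (Fin m) (Fin 2) R :=
    Matrix.of (fun p j => (A * T) (e (Sum.inr p)) (e (Sum.inl j))) with hC1
  have hblock : (A * T).submatrix e e = Matrix.fromBlocks !![0,1;1,0] 0 C1 (L * F2) := by
    ext i j
    cases i with
    | inl i =>
      cases j with
      | inl j =>
        rw [Matrix.submatrix_apply, hB, hcl i, hcl j]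
        fin_cases i <;> fin_cases j <;>
          simp [hg0, hg1, Finset.sum_range_succ]
      | inr q =>
        rw [Matrix.submatrix_apply, hB, hcl i, hcr q]
        rw [if_neg (by omega), if_neg (by omega)]
        fin_cases i <;> simp [hg0, Finset.sum_range_succ]
    | inr p =>
      cases j with
      | inl j => exact rfl
      | inr q =>
        rw [Matrix.submatrix_apply, hB, hcr p, hcr q]
        rw [if_neg (by omega), if_neg (by omega), zero_add]
        rw [Matrix.fromBlocks_apply₂₂, Matrix.mul_apply]
        have e2 : ∀ s : Fin m, L p s * F2 s q =
            (fun s : ℕ => gc ((p:ℕ) + 1 - s) * fc (2 + s + (q:ℕ))) (s:ℕ) := fun s => rfl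
        rw [Finset.sum_congr rfl (fun s _ => e2 s),
          Fin.sum_univ_eq_sum_range (fun s : ℕ => gc ((p:ℕ) + 1 - s) * fc (2 + s + (q:ℕ))) m]
        have key : ∀ N : ℕ, 2 + (p:ℕ) ≤ N → m ≤ N →
            True := fun _ _ _ => trivial
        have h1 : ∑ s ∈ range (2 + (p:ℕ)), fc (2 + (q:ℕ) + s) * gc (2 + (p:ℕ) - 1 - s)
            = ∑ s ∈ range (2 + (p:ℕ) + m), fc (2 + (q:ℕ) + s) * gc ((p:ℕ) + 1 - s) :=
          calc ∑ s ∈ range (2 + (p:ℕ)), fc (2 + (q:ℕ) + s) * gc (2 + (p:ℕ) - 1 - s)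
              = ∑ s ∈ range (2 + (p:ℕ)), fc (2 + (q:ℕ) + s) * gc ((p:ℕ) + 1 - s) := by
                refine Finset.sum_congr rfl fun s hs => ?_
                congr 2
                omega
            _ = ∑ s ∈ range (2 + (p:ℕ) + m), fc (2 + (q:ℕ) + s) * gc ((p:ℕ) + 1 - s) := by
                refine Finset.sum_subset
                  (Finset.range_subset_range.mpr (show 2 + (p:ℕ) ≤ 2 + (p:ℕ) + m by omega)) ?_
                intro s hs hns
                simp only [mem_range] at hs hns
                rw [show (p:ℕ) + 1 - s = 0 from by omega, hg0, mul_zero]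
        have h2 : ∑ s ∈ range m, gc ((p:ℕ) + 1 - s) * fc (2 + s + (q:ℕ))
            = ∑ s ∈ range (2 + (p:ℕ) + m), fc (2 + (q:ℕ) + s) * gc ((p:ℕ) + 1 - s) :=
          calc ∑ s ∈ range m, gc ((p:ℕ) + 1 - s) * fc (2 + s + (q:ℕ))
              = ∑ s ∈ range m, fc (2 + (q:ℕ) + s) * gc ((p:ℕ) + 1 - s) := by
                refine Finset.sum_congr rfl fun s hs => ?_
                rw [show 2 + s + (q:ℕ) = 2 + (q:ℕ) + s from by omega]
                ring
            _ = ∑ s ∈ range (2 + (p:ℕ) + m), fc (2 + (q:ℕ) + s) * gc ((p:ℕ) + 1 - s) := by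
                refine Finset.sum_subset
                  (Finset.range_subset_range.mpr (show m ≤ 2 + (p:ℕ) + m by omega)) ?_
                intro s hs hns
                simp only [mem_range] at hs hns
                have := p.isLt
                rw [show (p:ℕ) + 1 - s = 0 from by omega, hg0, mul_zero]
        rw [h1, ← h2]
  -- determinants of the blocks
  have hdetL : L.det = 1 := by
    rw [Matrix.det_of_lowerTriangular]
    · have : ∀ p : Fin m, L p p = 1 := by
        intro p; simp [hL, show (p:ℕ) + 1 - (p:ℕ) = 1 from by omega, hg1]
      simp [this]
    · intro i j hij
      rw [OrderDual.toDual_lt_toDual] at hij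
      have hij' : (i:ℕ) < (j:ℕ) := Fin.lt_def.mp hij
      simp only [hL, Matrix.of_apply]
      rw [show (i:ℕ) + 1 - (j:ℕ) = 0 from by omega, hg0]
  have hdetF2 : F2.det = hankel 2 m F := rfl
  have hdet2 : (!![(0:R),1;1,0]).det = -1 := by
    simp [Matrix.det_fin_two_of]
  have h4 : hankel 0 (2+m) (G-1) = A.det := by
    unfold hankel
    congr 1
    ext i j
    simp [hA, hgc]
  rw [h4, ← mul_one A.det, ← hdetT, ← Matrix.det_mul,
    ← Matrix.det_submatrix_equiv_self e, hblock,
    Matrix.det_fromBlocks_zero₁₂, Matrix.det_mul, hdet2, hdetL, hdetF2]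
  ring
end

section
/- Let u(x) be a formal power series over a commutative ring with u(0) = 1, and let G(x,y) = Σ g_{i,j} x^i y^j be a formal power series in two variables. For each n, let [G]_n denote the determinant of the n×n matrix (g_{i,j})_{0≤i,j≤n-1}. Then [u(x)·G(x,y)]_n = [G(x,y)]_n for all n. -/
open PowerSeries

/-- Gessel–Xin product rule: a bivariate power series `G(x,y)` is encoded as an
element of `PowerSeries (PowerSeries R)` (outer variable `x`, inner variable `y`),
with coefficient `g_{i,j}` given by `coeff j (coeff i G)`.  Multiplying `G` by a
univariate series `u(x)` with `u(0) = 1` does not change the determinant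
`[G]_n = det (g_{i,j})_{0 ≤ i,j ≤ n-1}`. -/
theorem stmt7 {R : Type*} [CommRing R] (u : PowerSeries R)
    (hu : PowerSeries.constantCoeff (R := R) u = 1)
    (G : PowerSeries (PowerSeries R)) (n : ℕ) :
    Matrix.det (Matrix.of fun i j : Fin n =>
        PowerSeries.coeff (R := R) (j : ℕ)
          (PowerSeries.coeff (R := PowerSeries R) (i : ℕ)
            (PowerSeries.map (PowerSeries.C (R := R)) u * G)))
      = Matrix.det (Matrix.of fun i j : Fin n =>
        PowerSeries.coeff (R := R) (j : ℕ) (PowerSeries.coeff (R := PowerSeries R) (i : ℕ) G)) := by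
  set M : Matrix (Fin n) (Fin n) R := Matrix.of fun i j : Fin n =>
    PowerSeries.coeff (R := R) (j : ℕ) (PowerSeries.coeff (R := PowerSeries R) (i : ℕ) G) with hM
  set L : Matrix (Fin n) (Fin n) R := Matrix.of fun i k : Fin n =>
    if (k : ℕ) ≤ (i : ℕ) then PowerSeries.coeff (R := R) ((i : ℕ) - (k : ℕ)) u else 0 with hL
  have key : (Matrix.of fun i j : Fin n =>
      PowerSeries.coeff (R := R) (j : ℕ)
        (PowerSeries.coeff (R := PowerSeries R) (i : ℕ)
          (PowerSeries.map (PowerSeries.C (R := R)) u * G))) = L * M := by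
    ext i j
    have hNj : ∀ k : Fin n, M k j = PowerSeries.coeff (R := R) (j : ℕ)
        (PowerSeries.coeff (R := PowerSeries R) (k : ℕ) G) := fun k => rfl
    simp only [Matrix.mul_apply, hL, Matrix.of_apply, hNj, Matrix.of_apply]
    rw [PowerSeries.coeff_mul, map_sum,
      Finset.Nat.sum_antidiagonal_eq_sum_range_succ_mk]
    have hfin : ∑ k : Fin n,
        (if (k:ℕ) ≤ (i:ℕ) then PowerSeries.coeff (R := R) ((i:ℕ) - (k:ℕ)) u else 0) *
          PowerSeries.coeff (R := R) (j:ℕ) (PowerSeries.coeff (R := PowerSeries R) (k:ℕ) G)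
        = ∑ k ∈ Finset.range n,
        (if k ≤ (i:ℕ) then PowerSeries.coeff (R := R) ((i:ℕ) - k) u else 0) *
          PowerSeries.coeff (R := R) (j:ℕ) (PowerSeries.coeff (R := PowerSeries R) k G) :=
      Fin.sum_univ_eq_sum_range (fun k => (if k ≤ (i:ℕ) then PowerSeries.coeff (R := R) ((i:ℕ) - k) u else 0) *
          PowerSeries.coeff (R := R) (j:ℕ) (PowerSeries.coeff (R := PowerSeries R) k G)) n
    rw [hfin]
    rw [← Finset.sum_subset (Finset.range_subset_range.2 i.isLt)
      (fun k _ hk => by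
        simp only [Finset.mem_range, Nat.lt_succ_iff, not_le] at hk
        simp [Nat.not_le.2 hk])]
    rw [← Finset.sum_range_reflect]
    apply Finset.sum_congr rfl
    intro k hk
    simp only [Finset.mem_range, Nat.lt_succ_iff] at hk
    have h1 : (i:ℕ) + 1 - 1 - k = (i:ℕ) - k := by omega
    have h2 : (i:ℕ) - ((i:ℕ) - k) = k := by omega
    have h3 : (i:ℕ) - k ≤ (i:ℕ) := by omega
    simp only [h2]
    rw [if_pos hk]
    simp [PowerSeries.coeff_map, PowerSeries.coeff_C_mul, h2, mul_comm]
  rw [key, Matrix.det_mul]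
  have hLdet : L.det = 1 := by
    rw [Matrix.det_of_lowerTriangular L (fun i j hij => by
      simp only [hL, Matrix.of_apply]
      have h : (i:ℕ) < (j:ℕ) := OrderDual.toDual_lt_toDual.mp hij
      rw [if_neg (by omega)])]
    have : ∀ i : Fin n, L i i = 1 := by
      intro i
      simp [hL, PowerSeries.coeff_zero_eq_constantCoeff, hu]
    simp [this]
  rw [hLdet, one_mul]
end

section
/- For every even integer m ≥ 2 and every subset V of {1,...,m} consisting entirely of odd numbers, the Hankel determinant H_n of the counting sequence of Dyck paths of semilength n with no peak height congruent mod m to an element of V equals 1 for every n ≥ 1. -/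
/-- Height of a lattice path (given by up/down indicators `p`) after `k` steps. -/
def pathHeight (p : ℕ → Bool) (k : ℕ) : ℤ :=
  ∑ i ∈ Finset.range k, (if p i then (1 : ℤ) else -1)

/-- The number of Dyck paths of semilength `n` (paths of `2n` steps `(1,1)`/`(1,-1)`
from `(0,0)` to `(2n,0)` staying weakly above the x-axis) none of whose peaks has
height in the set `S`.  A peak is an up-step immediately followed by a down-step;
its height is the y-coordinate of its apex. -/
noncomputable def dyckCount (S : ℕ → Prop) (n : ℕ) : ℕ :=
  Nat.card {p : ℕ → Bool //
    (∀ i, 2 * n ≤ i → p i = false) ∧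
    (∀ k, k ≤ 2 * n → 0 ≤ pathHeight p k) ∧
    pathHeight p (2 * n) = 0 ∧
    (∀ i, i + 1 < 2 * n → p i = true → p (i + 1) = false →
      ¬ S (pathHeight p (i + 1)).toNat) }

namespace Stmt13Aux


def wnat (b : ℕ → ℕ) : ℕ → ℕ → ℕ
  | 0, k => if k = 0 then 1 else 0
  | s + 1, k => (if k = 0 then 0 else wnat b s (k - 1)) + b k * wnat b s k + wnat b s (k + 1)

lemma wnat_support (b : ℕ → ℕ) : ∀ s k, s < k → wnat b s k = 0 := by
  intro s
  induction s with
  | zero => intro k hk; simp [wnat]; omega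
  | succ s ih =>
    intro k hk
    have h1 : wnat b s (k - 1) = 0 := ih _ (by omega)
    have h2 : wnat b s k = 0 := ih _ (by omega)
    have h3 : wnat b s (k + 1) = 0 := ih _ (by omega)
    simp [wnat, h1, h2, h3]

lemma wnat_diag (b : ℕ → ℕ) : ∀ s, wnat b s s = 1 := by
  intro s
  induction s with
  | zero => simp [wnat]
  | succ s ih =>
    have h2 : wnat b s (s + 1) = 0 := wnat_support b s _ (by omega)
    have h3 : wnat b s (s + 2) = 0 := wnat_support b s _ (by omega)
    simp [wnat, h2, h3, ih]

lemma wnat_zero (b : ℕ → ℕ) (k : ℕ) : wnat b 0 k = if k = 0 then 1 else 0 := rfl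

lemma wnat_succ (b : ℕ → ℕ) (s k : ℕ) : wnat b (s + 1) k
    = (if k = 0 then 0 else wnat b s (k - 1)) + b k * wnat b s k + wnat b s (k + 1) := rfl

def Wz (b : ℕ → ℤ) : ℕ → ℤ → ℤ → ℤ
  | 0, a, c => if a = c ∧ 0 ≤ a then 1 else 0
  | s + 1, a, c => if c < 0 then 0 else Wz b s a (c - 1) + b c.toNat * Wz b s a c + Wz b s a (c + 1)

lemma Wz_zero (b : ℕ → ℤ) (a c : ℤ) :
    Wz b 0 a c = if a = c ∧ 0 ≤ a then 1 else 0 := rfl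

lemma Wz_succ (b : ℕ → ℤ) (s : ℕ) (a c : ℤ) :
    Wz b (s + 1) a c = if c < 0 then 0 else
      Wz b s a (c - 1) + b c.toNat * Wz b s a c + Wz b s a (c + 1) := rfl

lemma Wz_neg_right (b : ℕ → ℤ) : ∀ (s : ℕ) (a c : ℤ), c < 0 → Wz b s a c = 0 := by
  intro s
  induction s with
  | zero => intro a c hc; rw [Wz_zero, if_neg (by omega)]
  | succ s _ => intro a c hc; rw [Wz_succ, if_pos hc]

lemma Wz_neg_left (b : ℕ → ℤ) : ∀ (s : ℕ) (a c : ℤ), a < 0 → Wz b s a c = 0 := by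
  intro s
  induction s with
  | zero => intro a c ha; rw [Wz_zero, if_neg (by omega)]
  | succ s ih =>
    intro a c ha
    rw [Wz_succ]
    split
    · rfl
    · rw [ih a (c - 1) ha, ih a c ha, ih a (c + 1) ha]; ring

lemma Wz_support (b : ℕ → ℤ) : ∀ (s : ℕ) (a c : ℤ), a + (s : ℤ) < c → Wz b s a c = 0 := by
  intro s
  induction s with
  | zero => intro a c h; rw [Wz_zero, if_neg (by push_cast at h; omega)]
  | succ s ih =>
    intro a c h
    rw [Wz_succ]
    split
    · rfl
    · rw [ih a (c - 1) (by push_cast at h ⊢; omega), ih a c (by push_cast at h ⊢; omega),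
        ih a (c + 1) (by push_cast at h ⊢; omega)]
      ring

lemma Wz_left_rec (b : ℕ → ℤ) : ∀ (s : ℕ) (a c : ℤ), Wz b (s + 1) a c =
    if a < 0 then 0 else Wz b s (a - 1) c + b a.toNat * Wz b s a c + Wz b s (a + 1) c := by
  intro s
  induction s with
  | zero =>
    intro a c
    by_cases ha : a < 0
    · rw [Wz_neg_left b 1 a c ha, if_pos ha]
    · rw [if_neg ha, Wz_succ, Wz_zero, Wz_zero, Wz_zero, Wz_zero, Wz_zero]
      by_cases hc : c < 0
      · rw [if_pos hc, if_neg (by omega : ¬(a - 1 = c ∧ 0 ≤ a - 1)),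
          if_neg (by omega : ¬(a = c ∧ 0 ≤ a)), if_neg (by omega : ¬(a + 1 = c ∧ 0 ≤ a + 1))]
        all_goals ring
      · rw [if_neg hc]
        rcases eq_or_ne a c with h | h
        · subst h
          rw [if_neg (by omega : ¬(a = a - 1 ∧ 0 ≤ a)), if_neg (by omega : ¬(a - 1 = a ∧ 0 ≤ a - 1)),
            if_neg (by omega : ¬(a = a + 1 ∧ 0 ≤ a)), if_neg (by omega : ¬(a + 1 = a ∧ 0 ≤ a + 1)),
            if_pos (by omega : (a = a ∧ 0 ≤ a))]
          all_goals ring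
        · rcases eq_or_ne a (c - 1) with h1 | h1
          · rw [if_pos (by omega : (a = c - 1 ∧ 0 ≤ a)), if_pos (by omega : (a + 1 = c ∧ 0 ≤ a + 1)),
              if_neg (by omega : ¬(a = c ∧ 0 ≤ a)), if_neg (by omega : ¬(a = c + 1 ∧ 0 ≤ a)),
              if_neg (by omega : ¬(a - 1 = c ∧ 0 ≤ a - 1))]
            all_goals ring
          · rcases eq_or_ne a (c + 1) with h2 | h2
            · rw [if_neg (by omega : ¬(a = c - 1 ∧ 0 ≤ a)), if_neg (by omega : ¬(a + 1 = c ∧ 0 ≤ a + 1)),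
                if_neg (by omega : ¬(a = c ∧ 0 ≤ a)), if_pos (by omega : (a = c + 1 ∧ 0 ≤ a)),
                if_pos (by omega : (a - 1 = c ∧ 0 ≤ a - 1))]
              all_goals ring
            · rw [if_neg (by omega : ¬(a = c - 1 ∧ 0 ≤ a)), if_neg (by omega : ¬(a + 1 = c ∧ 0 ≤ a + 1)),
                if_neg (by omega : ¬(a = c ∧ 0 ≤ a)), if_neg (by omega : ¬(a = c + 1 ∧ 0 ≤ a)),
                if_neg (by omega : ¬(a - 1 = c ∧ 0 ≤ a - 1))]
              all_goals ring
  | succ s ih =>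
    intro a c
    by_cases ha : a < 0
    · rw [Wz_neg_left b _ a c ha, if_pos ha]
    · rw [if_neg ha]
      by_cases hc : c < 0
      · rw [Wz_neg_right b _ a c hc, Wz_neg_right b _ (a - 1) c hc,
          Wz_neg_right b _ (a + 1) c hc, Wz_neg_right b _ a c hc]
        ring
      · have hL : Wz b (s + 1 + 1) a c =
            Wz b s (a - 1) (c - 1) + b a.toNat * Wz b s a (c - 1) + Wz b s (a + 1) (c - 1)
            + b c.toNat * Wz b s (a - 1) c + b a.toNat * b c.toNat * Wz b s a c
            + b c.toNat * Wz b s (a + 1) c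
            + Wz b s (a - 1) (c + 1) + b a.toNat * Wz b s a (c + 1)
            + Wz b s (a + 1) (c + 1) := by
          rw [Wz_succ b (s + 1) a c, if_neg hc, ih a (c - 1), ih a c, ih a (c + 1),
            if_neg ha, if_neg ha, if_neg ha]
          ring
        have hR : Wz b (s + 1) (a - 1) c + b a.toNat * Wz b (s + 1) a c
            + Wz b (s + 1) (a + 1) c =
            Wz b s (a - 1) (c - 1) + b a.toNat * Wz b s a (c - 1) + Wz b s (a + 1) (c - 1)
            + b c.toNat * Wz b s (a - 1) c + b a.toNat * b c.toNat * Wz b s a c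
            + b c.toNat * Wz b s (a + 1) c
            + Wz b s (a - 1) (c + 1) + b a.toNat * Wz b s a (c + 1)
            + Wz b s (a + 1) (c + 1) := by
          rw [Wz_succ b s (a - 1) c, Wz_succ b s a c, Wz_succ b s (a + 1) c,
            if_neg hc, if_neg hc, if_neg hc]
          ring
        rw [hL, hR]

lemma Wz_symm (b : ℕ → ℤ) : ∀ (s : ℕ) (a c : ℤ), Wz b s a c = Wz b s c a := by
  intro s
  induction s with
  | zero =>
    intro a c
    rw [Wz_zero, Wz_zero]
    by_cases h : a = c ∧ 0 ≤ a
    · rw [if_pos h, if_pos (show c = a ∧ 0 ≤ c by omega)]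
    · rw [if_neg h, if_neg (show ¬(c = a ∧ 0 ≤ c) by omega)]
  | succ s ih =>
    intro a c
    rw [Wz_succ, Wz_left_rec b s c a]
    split
    · rfl
    · rw [ih a (c - 1), ih a c, ih a (c + 1)]

lemma Wz_chapman (b : ℕ → ℤ) (i : ℕ) (a : ℤ) (K : ℕ) (hK : a + (i : ℤ) < (K : ℤ)) :
    ∀ (j : ℕ) (c : ℤ), Wz b (i + j) a c
      = ∑ k ∈ Finset.range K, Wz b i a (k : ℤ) * Wz b j (k : ℤ) c := by
  intro j
  induction j with
  | zero =>
    intro c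
    rw [Nat.add_zero]
    by_cases hc0 : 0 ≤ c
    · by_cases hcK : c < (K : ℤ)
      · have hmem : c.toNat ∈ Finset.range K := Finset.mem_range.mpr (by omega)
        have hsum : ∑ k ∈ Finset.range K, Wz b i a (k : ℤ) * Wz b 0 (k : ℤ) c
            = Wz b i a ((c.toNat : ℕ) : ℤ) * Wz b 0 ((c.toNat : ℕ) : ℤ) c := by
          apply Finset.sum_eq_single_of_mem c.toNat hmem
          intro k hk hne
          rw [Wz_zero, if_neg (show ¬((k : ℤ) = c ∧ 0 ≤ (k : ℤ)) by omega)]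
          ring
        rw [hsum, Wz_zero, if_pos (show ((c.toNat : ℕ) : ℤ) = c ∧ 0 ≤ ((c.toNat : ℕ) : ℤ) by omega),
          mul_one]
        congr 1
        omega
      · rw [Wz_support b i a c (by omega)]
        symm
        apply Finset.sum_eq_zero
        intro k hk
        have hk' := Finset.mem_range.mp hk
        rw [Wz_zero, if_neg (show ¬((k : ℤ) = c ∧ 0 ≤ (k : ℤ)) by omega)]
        ring
    · rw [Wz_neg_right b i a c (by omega)]
      symm
      apply Finset.sum_eq_zero
      intro k hk
      rw [Wz_zero, if_neg (show ¬((k : ℤ) = c ∧ 0 ≤ (k : ℤ)) by omega)]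
      ring
  | succ j ih =>
    intro c
    rw [show i + (j + 1) = (i + j) + 1 from rfl, Wz_succ]
    by_cases hc : c < 0
    · rw [if_pos hc]
      symm
      apply Finset.sum_eq_zero
      intro k hk
      rw [Wz_succ, if_pos hc]
      ring
    · rw [if_neg hc, ih (c - 1), ih c, ih (c + 1), Finset.mul_sum, ← Finset.sum_add_distrib,
        ← Finset.sum_add_distrib]
      apply Finset.sum_congr rfl
      intro k hk
      rw [Wz_succ b j (k : ℤ) c, if_neg hc]
      ring
lemma Wz_eq_wnat (bn : ℕ → ℕ) :
    ∀ s k : ℕ, Wz (fun t => (bn t : ℤ)) s 0 (k : ℤ) = (wnat bn s k : ℤ) := by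
  intro s
  induction s with
  | zero =>
    intro k
    rw [Wz_zero, wnat_zero]
    by_cases hk : k = 0
    · subst hk; rw [if_pos (by norm_num), if_pos rfl]; norm_num
    · rw [if_neg (by omega : ¬((0 : ℤ) = (k : ℤ) ∧ (0 : ℤ) ≤ 0)), if_neg hk]; norm_num
  | succ s ih =>
    intro k
    rw [Wz_succ, if_neg (by omega : ¬((k : ℤ) < 0)), wnat_succ]
    have htoNat : ((k : ℤ)).toNat = k := by omega
    rw [htoNat]
    by_cases hk : k = 0
    · subst hk
      simp only [Nat.cast_zero]
      rw [Wz_neg_right _ s 0 ((0 : ℤ) - 1) (by omega)]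
      have e0 := ih 0
      have e1 := ih 1
      simp only [Nat.cast_zero, Nat.cast_one] at e0 e1
      rw [show (0 : ℤ) + 1 = (1 : ℤ) by norm_num, e0, e1]
      simp only [if_true]
      push_cast
      ring
    · have h1 : (k : ℤ) - 1 = ((k - 1 : ℕ) : ℤ) := by omega
      have h2 : (k : ℤ) + 1 = ((k + 1 : ℕ) : ℤ) := by omega
      rw [h1, h2, ih (k - 1), ih k, ih (k + 1), if_neg hk]
      push_cast
      ring

lemma hankel_det (bn : ℕ → ℕ) (n : ℕ) (hn : 1 ≤ n) (d : ℕ → ℤ)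
    (hd : ∀ s, d s = (wnat bn s 0 : ℤ)) :
    Matrix.det (Matrix.of fun i j : Fin n => d ((i : ℕ) + (j : ℕ))) = 1 := by
  set b : ℕ → ℤ := fun t => (bn t : ℤ) with hb
  set V : Matrix (Fin n) (Fin n) ℤ :=
    Matrix.of (fun i k : Fin n => Wz b (i : ℕ) 0 ((k : ℕ) : ℤ)) with hV
  have hHV : (Matrix.of fun i j : Fin n => d ((i : ℕ) + (j : ℕ))) = V * V.transpose := by
    ext i j
    rw [Matrix.mul_apply]
    simp only [Matrix.of_apply, Matrix.transpose_apply, hV]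
    rw [hd, ← Wz_eq_wnat bn ((i : ℕ) + (j : ℕ)) 0,
      show ((0 : ℕ) : ℤ) = (0 : ℤ) from rfl,
      Wz_chapman b (i : ℕ) 0 n (by push_cast; omega) (j : ℕ) 0]
    rw [← Finset.sum_range (fun k => Wz b (i : ℕ) 0 (k : ℤ) * Wz b (j : ℕ) 0 (k : ℤ))]
    apply Finset.sum_congr rfl
    intro k hk
    rw [Wz_symm b (j : ℕ) (k : ℤ) 0]
  rw [hHV, Matrix.det_mul, Matrix.det_transpose]
  have hdV : V.det = 1 := by
    have htri : V.BlockTriangular OrderDual.toDual := by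
      intro i j hij
      simp only [Matrix.of_apply, hV]
      have hij' : (i : ℕ) < (j : ℕ) := hij
      exact Wz_support b (i : ℕ) 0 ((j : ℕ) : ℤ) (by push_cast; omega)
    rw [Matrix.det_of_lowerTriangular V htri]
    apply Finset.prod_eq_one
    intro i _
    simp only [Matrix.of_apply, hV]
    rw [Wz_eq_wnat bn (i : ℕ) (i : ℕ), wnat_diag bn (i : ℕ)]
    norm_num
  rw [hdV]
  norm_num


def PathCond (S : ℕ → Prop) (s k : ℕ) (p : ℕ → Bool) : Prop :=
  (∀ i, 2 * s ≤ i → p i = false) ∧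
  (∀ j, j ≤ 2 * s → 0 ≤ pathHeight p j) ∧
  pathHeight p (2 * s) = 2 * (k : ℤ) ∧
  (∀ i, i + 1 < 2 * s → p i = true → p (i + 1) = false → ¬ S (pathHeight p (i + 1)).toNat)

noncomputable def dyckA (S : ℕ → Prop) (s k : ℕ) : ℕ :=
  Nat.card {p : ℕ → Bool // PathCond S s k p}

instance pathFinite (S : ℕ → Prop) (s k : ℕ) : Finite {p : ℕ → Bool // PathCond S s k p} := by
  apply Finite.of_injective (fun q : {p : ℕ → Bool // PathCond S s k p} =>
    (fun i : Fin (2 * s) => q.1 i))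
  rintro ⟨p, hp⟩ ⟨r, hr⟩ h
  have h' : ∀ i : Fin (2 * s), p i = r i := fun i => congrFun h i
  apply Subtype.ext
  funext i
  show p i = r i
  rcases lt_or_ge i (2 * s) with hi | hi
  · exact h' ⟨i, hi⟩
  · rw [hp.1 i hi, hr.1 i hi]

lemma pathHeight_congr {p q : ℕ → Bool} {k : ℕ} (h : ∀ i, i < k → p i = q i) :
    pathHeight p k = pathHeight q k :=
  Finset.sum_congr rfl fun i hi => by rw [h i (Finset.mem_range.mp hi)]

lemma pathHeight_succ (p : ℕ → Bool) (t : ℕ) :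
    pathHeight p (t + 1) = pathHeight p t + (if p t then 1 else -1) :=
  Finset.sum_range_succ _ _

lemma pathHeight_two_step (p : ℕ → Bool) (t : ℕ) :
    pathHeight p (t + 2) = pathHeight p t
      + (if p t then 1 else -1) + (if p (t + 1) then 1 else -1) := by
  rw [show t + 2 = (t + 1) + 1 from rfl, pathHeight_succ, pathHeight_succ]

lemma pathHeight_succ_true (p : ℕ → Bool) (t : ℕ) (h : p t = true) :
    pathHeight p (t + 1) = pathHeight p t + 1 := by
  rw [pathHeight_succ, h]
  norm_num

lemma pathHeight_succ_false (p : ℕ → Bool) (t : ℕ) (h : p t = false) :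
    pathHeight p (t + 1) = pathHeight p t - 1 := by
  rw [pathHeight_succ, h]
  have e : (if (false : Bool) then (1 : ℤ) else -1) = -1 := rfl
  rw [e]
  ring

/-- truncation of a path to its first `2 s` steps -/
def trunc (s : ℕ) (p : ℕ → Bool) : ℕ → Bool := fun i => if i < 2 * s then p i else false

/-- extension of a path by two extra steps -/
def ext2 (s : ℕ) (a b : Bool) (q : ℕ → Bool) : ℕ → Bool :=
  fun i => if i = 2 * s then a else if i = 2 * s + 1 then b else q i

lemma trunc_lt (s : ℕ) (p : ℕ → Bool) (i : ℕ) (hi : i < 2 * s) : trunc s p i = p i :=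
  if_pos hi

lemma pathHeight_trunc (s : ℕ) (p : ℕ → Bool) (j : ℕ) (hj : j ≤ 2 * s) :
    pathHeight (trunc s p) j = pathHeight p j :=
  pathHeight_congr fun i hi => trunc_lt s p i (lt_of_lt_of_le hi hj)

lemma ext2_lt (s : ℕ) (a b : Bool) (q : ℕ → Bool) (i : ℕ) (hi : i < 2 * s) :
    ext2 s a b q i = q i := by
  unfold ext2
  rw [if_neg (by omega), if_neg (by omega)]

lemma ext2_at (s : ℕ) (a b : Bool) (q : ℕ → Bool) : ext2 s a b q (2 * s) = a := if_pos rfl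

lemma ext2_at' (s : ℕ) (a b : Bool) (q : ℕ → Bool) : ext2 s a b q (2 * s + 1) = b := by
  unfold ext2
  rw [if_neg (by omega), if_pos rfl]

lemma pathHeight_ext2 (s : ℕ) (a b : Bool) (q : ℕ → Bool) (j : ℕ) (hj : j ≤ 2 * s) :
    pathHeight (ext2 s a b q) j = pathHeight q j :=
  pathHeight_congr fun i hi => ext2_lt s a b q i (by omega)

lemma pathHeight_ext2_odd (s : ℕ) (a b : Bool) (q : ℕ → Bool) :
    pathHeight (ext2 s a b q) (2 * s + 1) = pathHeight q (2 * s) + (if a then 1 else -1) := by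
  rw [pathHeight_succ, pathHeight_ext2 s a b q _ le_rfl, ext2_at]

lemma pathHeight_ext2_end (s : ℕ) (a b : Bool) (q : ℕ → Bool) :
    pathHeight (ext2 s a b q) (2 * s + 2) = pathHeight q (2 * s)
      + (if a then 1 else -1) + (if b then 1 else -1) := by
  rw [pathHeight_two_step, pathHeight_ext2 s a b q _ le_rfl, ext2_at, ext2_at']

lemma trunc_ext2 (s : ℕ) (a b : Bool) (q : ℕ → Bool) (hq : ∀ i, 2 * s ≤ i → q i = false) :
    trunc s (ext2 s a b q) = q := by
  funext i
  rcases lt_or_ge i (2 * s) with hi | hi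
  · rw [trunc_lt _ _ _ hi, ext2_lt _ _ _ _ _ hi]
  · unfold trunc
    rw [if_neg (by omega), hq i hi]

lemma ext2_trunc (s : ℕ) (a b : Bool) (p : ℕ → Bool)
    (hsup : ∀ i, 2 * (s + 1) ≤ i → p i = false)
    (ha : p (2 * s) = a) (hb : p (2 * s + 1) = b) :
    ext2 s a b (trunc s p) = p := by
  funext i
  rcases lt_or_ge i (2 * s) with hi | hi
  · rw [ext2_lt _ _ _ _ _ hi, trunc_lt _ _ _ hi]
  · rcases eq_or_ne i (2 * s) with h1 | h1
    · subst h1; rw [ext2_at, ha]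
    · rcases eq_or_ne i (2 * s + 1) with h2 | h2
      · subst h2; rw [ext2_at', hb]
      · unfold ext2
        rw [if_neg h1, if_neg h2]
        unfold trunc
        rw [if_neg (by omega), hsup i (by omega)]

/-- forward: truncating a good path of semilength `s+1` gives a good path of semilength `s`. -/
lemma trunc_cond (S : ℕ → Prop) (s k' : ℕ) (p : ℕ → Bool)
    (hh : ∀ j, j ≤ 2 * (s + 1) → 0 ≤ pathHeight p j)
    (hpk : ∀ i, i + 1 < 2 * (s + 1) → p i = true → p (i + 1) = false →
      ¬ S (pathHeight p (i + 1)).toNat)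
    (hend : pathHeight p (2 * s) = 2 * (k' : ℤ)) :
    PathCond S s k' (trunc s p) := by
  refine ⟨fun i hi => by unfold trunc; rw [if_neg (by omega)], ?_, ?_, ?_⟩
  · intro j hj
    rw [pathHeight_trunc _ _ _ hj]
    exact hh j (by omega)
  · rw [pathHeight_trunc _ _ _ le_rfl, hend]
  · intro i hi hti hfi
    rw [pathHeight_trunc _ _ _ (by omega : i + 1 ≤ 2 * s)]
    refine hpk i (by omega) ?_ ?_
    · rw [← trunc_lt s p i (by omega)]; exact hti
    · rw [← trunc_lt s p (i + 1) (by omega)]; exact hfi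

/-- backward: extending a good path of semilength `s` by two steps. -/
lemma ext2_cond (S : ℕ → Prop) (hS : ∀ j, ¬ S (2 * j)) (s k k' : ℕ) (a b : Bool)
    (q : ℕ → Bool) (hq : PathCond S s k' q)
    (hh1 : (0 : ℤ) ≤ 2 * (k' : ℤ) + (if a then 1 else -1))
    (hend : 2 * (k' : ℤ) + (if a then 1 else -1) + (if b then 1 else -1) = 2 * (k : ℤ))
    (hpeak : a = true → b = false → ¬ S (2 * k' + 1)) :
    PathCond S (s + 1) k (ext2 s a b q) := by
  obtain ⟨hq1, hq2, hq3, hq4⟩ := hq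
  refine ⟨?_, ?_, ?_, ?_⟩
  · intro i hi
    unfold ext2
    rw [if_neg (by omega), if_neg (by omega)]
    exact hq1 i (by omega)
  · intro j hj
    rcases le_or_gt j (2 * s) with h | h
    · rw [pathHeight_ext2 _ _ _ _ _ h]; exact hq2 j h
    · rcases eq_or_ne j (2 * s + 1) with h1 | h1
      · subst h1
        rw [pathHeight_ext2_odd, hq3]
        exact hh1
      · have h2 : j = 2 * s + 2 := by omega
        subst h2
        rw [pathHeight_ext2_end, hq3, hend]
        positivity
  · rw [show 2 * (s + 1) = 2 * s + 2 from by ring, pathHeight_ext2_end, hq3, hend]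
  · intro i hi hti hfi
    rcases lt_or_ge (i + 1) (2 * s) with h | h
    · rw [pathHeight_ext2 _ _ _ _ _ (by omega : i + 1 ≤ 2 * s)]
      refine hq4 i h ?_ ?_
      · rw [← ext2_lt s a b q i (by omega)]; exact hti
      · rw [← ext2_lt s a b q (i + 1) (by omega)]; exact hfi
    · rcases eq_or_ne (i + 1) (2 * s) with h1 | h1
      · -- cross-boundary peak at even height 2 k'
        rw [h1, pathHeight_ext2 _ _ _ _ _ le_rfl, hq3]
        rw [show (2 * (k' : ℤ)).toNat = 2 * k' from by omega]
        exact hS k'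
      · rcases eq_or_ne (i + 1) (2 * s + 1) with h2 | h2
        · -- peak within the last pair, at odd height 2 k' + 1
          have hi' : i = 2 * s := by omega
          subst hi'
          rw [ext2_at] at hti
          rw [h2] at hfi
          rw [ext2_at'] at hfi
          rw [h2, pathHeight_ext2_odd, hq3, hti]
          rw [show 2 * (k' : ℤ) + (if true then 1 else -1) = 2 * (k' : ℤ) + 1 from by norm_num]
          rw [show (2 * (k' : ℤ) + 1).toNat = 2 * k' + 1 from by omega]
          exact hpeak hti hfi
        · -- i + 1 = 2 s + 2 impossible (apex must be < 2 (s+1))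
          omega





lemma finite_and {α : Type*} (P Q : α → Prop) [Finite {x // P x}] : Finite {x // P x ∧ Q x} := by
  apply Finite.of_injective (fun y : {x // P x ∧ Q x} => (⟨y.1, y.2.1⟩ : {x // P x}))
  intro u v h
  have h' : (⟨u.1, u.2.1⟩ : {x // P x}) = ⟨v.1, v.2.1⟩ := h
  exact Subtype.ext (congrArg (fun y : {x // P x} => y.1) h')

lemma card_split_bool {α : Type*} (P : α → Prop) [Finite {x // P x}] (f : α → Bool) :
    Nat.card {x // P x}
      = Nat.card {x // P x ∧ f x = true} + Nat.card {x // P x ∧ f x = false} := by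
  classical
  haveI := finite_and P (fun x => f x = true)
  haveI := finite_and P (fun x => f x = false)
  have e : {x // P x} ≃ {x // P x ∧ f x = true} ⊕ {x // P x ∧ f x = false} := by
    refine (Equiv.sumCompl (fun y : {x // P x} => f y.1 = true)).symm.trans
      (Equiv.sumCongr (Equiv.subtypeSubtypeEquivSubtypeInter P (fun x => f x = true)) ?_)
    refine (Equiv.subtypeSubtypeEquivSubtypeInter P (fun x => ¬ (f x = true))).trans
      (Equiv.subtypeEquivRight fun x => ?_)
    simp [Bool.not_eq_true]
  rw [Nat.card_congr e, Nat.card_sum]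

open Classical in
lemma card_guard {α : Type*} (E : Prop) (P : α → Prop) [Finite {x // P x}] :
    Nat.card {x // E ∧ P x} = if E then Nat.card {x // P x} else 0 := by
  classical
  by_cases hE : E
  · rw [if_pos hE]
    exact Nat.card_congr (Equiv.subtypeEquivRight fun x => and_iff_right hE)
  · rw [if_neg hE]
    haveI : IsEmpty {x // E ∧ P x} := ⟨fun x => hE x.2.1⟩
    exact Nat.card_of_isEmpty

/-- generic builder for the four last-pair cases -/
def buildEquiv (S : ℕ → Prop) (s k : ℕ) (a b : Bool) (E : Prop) (k' : ℕ)
    (fwd : ∀ p, PathCond S (s + 1) k p → p (2 * s) = a → p (2 * s + 1) = b →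
      E ∧ PathCond S s k' (trunc s p))
    (bwd : ∀ q, E → PathCond S s k' q → PathCond S (s + 1) k (ext2 s a b q)) :
    {p : ℕ → Bool // PathCond S (s + 1) k p ∧ p (2 * s) = a ∧ p (2 * s + 1) = b}
      ≃ {q : ℕ → Bool // E ∧ PathCond S s k' q} where
  toFun x := ⟨trunc s x.1, fwd x.1 x.2.1 x.2.2.1 x.2.2.2⟩
  invFun y := ⟨ext2 s a b y.1, bwd y.1 y.2.1 y.2.2, ext2_at s a b y.1, ext2_at' s a b y.1⟩
  left_inv x := Subtype.ext (ext2_trunc s a b x.1 x.2.1.1 x.2.2.1 x.2.2.2)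
  right_inv y := Subtype.ext (trunc_ext2 s a b y.1 y.2.2.1)

section cases
variable (S : ℕ → Prop) (s k : ℕ)

lemma fwdTT : ∀ p, PathCond S (s + 1) k p → p (2 * s) = true → p (2 * s + 1) = true →
    (k ≠ 0) ∧ PathCond S s (k - 1) (trunc s p) := by
  intro p hp ha hb
  have he := hp.2.2.1
  rw [show 2 * (s + 1) = 2 * s + 2 from by ring] at he
  have h2 := pathHeight_two_step p (2 * s)
  rw [ha, hb] at h2
  norm_num at h2
  have h0 : 0 ≤ pathHeight p (2 * s) := hp.2.1 (2 * s) (by omega)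
  have hk : k ≠ 0 := by omega
  refine ⟨hk, trunc_cond S s (k - 1) p hp.2.1 hp.2.2.2 ?_⟩
  have hc : ((k - 1 : ℕ) : ℤ) = (k : ℤ) - 1 := by omega
  rw [hc]
  omega

lemma fwdTF : ∀ p, PathCond S (s + 1) k p → p (2 * s) = true → p (2 * s + 1) = false →
    (¬ S (2 * k + 1)) ∧ PathCond S s k (trunc s p) := by
  intro p hp ha hb
  have he := hp.2.2.1
  rw [show 2 * (s + 1) = 2 * s + 2 from by ring] at he
  have h2 := pathHeight_two_step p (2 * s)
  rw [ha, hb] at h2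
  norm_num at h2
  have hodd : pathHeight p (2 * s + 1) = 2 * (k : ℤ) + 1 := by
    rw [pathHeight_succ, ha]
    norm_num
    omega
  have hpk := hp.2.2.2 (2 * s) (by omega) ha hb
  rw [hodd, show (2 * (k : ℤ) + 1).toNat = 2 * k + 1 from by omega] at hpk
  exact ⟨hpk, trunc_cond S s k p hp.2.1 hp.2.2.2 (by omega)⟩

lemma fwdFT : ∀ p, PathCond S (s + 1) k p → p (2 * s) = false → p (2 * s + 1) = true →
    (k ≠ 0) ∧ PathCond S s k (trunc s p) := by
  intro p hp ha hb
  have he := hp.2.2.1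
  rw [show 2 * (s + 1) = 2 * s + 2 from by ring] at he
  have h2 := pathHeight_two_step p (2 * s)
  rw [ha, hb] at h2
  norm_num at h2
  have hodd : pathHeight p (2 * s + 1) = pathHeight p (2 * s) - 1 :=
    pathHeight_succ_false p (2 * s) ha
  have h0 : 0 ≤ pathHeight p (2 * s + 1) := hp.2.1 (2 * s + 1) (by omega)
  have hk : k ≠ 0 := by omega
  exact ⟨hk, trunc_cond S s k p hp.2.1 hp.2.2.2 (by omega)⟩

lemma fwdFF : ∀ p, PathCond S (s + 1) k p → p (2 * s) = false → p (2 * s + 1) = false →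
    True ∧ PathCond S s (k + 1) (trunc s p) := by
  intro p hp ha hb
  have he := hp.2.2.1
  rw [show 2 * (s + 1) = 2 * s + 2 from by ring] at he
  have h2 := pathHeight_two_step p (2 * s)
  rw [ha, hb] at h2
  norm_num at h2
  refine ⟨trivial, trunc_cond S s (k + 1) p hp.2.1 hp.2.2.2 ?_⟩
  push_cast
  omega

lemma bwdTT (hS : ∀ j, ¬ S (2 * j)) : ∀ q, (k ≠ 0) → PathCond S s (k - 1) q →
    PathCond S (s + 1) k (ext2 s true true q) := by
  intro q hk hq
  refine ext2_cond S hS s k (k - 1) true true q hq ?_ ?_ ?_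
  · norm_num
    positivity
  · norm_num
    omega
  · intro _ hb
    simp at hb

lemma bwdTF (hS : ∀ j, ¬ S (2 * j)) : ∀ q, (¬ S (2 * k + 1)) → PathCond S s k q →
    PathCond S (s + 1) k (ext2 s true false q) := by
  intro q hE hq
  refine ext2_cond S hS s k k true false q hq ?_ ?_ ?_
  · norm_num
    positivity
  · norm_num
  · intro _ _
    exact hE

lemma bwdFT (hS : ∀ j, ¬ S (2 * j)) : ∀ q, (k ≠ 0) → PathCond S s k q →
    PathCond S (s + 1) k (ext2 s false true q) := by
  intro q hk hq
  refine ext2_cond S hS s k k false true q hq ?_ ?_ ?_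
  · norm_num
    omega
  · norm_num
  · intro ha _
    simp at ha

lemma bwdFF (hS : ∀ j, ¬ S (2 * j)) : ∀ q, True → PathCond S s (k + 1) q →
    PathCond S (s + 1) k (ext2 s false false q) := by
  intro q _ hq
  refine ext2_cond S hS s k (k + 1) false false q hq ?_ ?_ ?_
  · norm_num
    push_cast
    omega
  · norm_num
    push_cast
    omega
  · intro ha _
    simp at ha

end cases

open Classical in
noncomputable def bS (S : ℕ → Prop) (k : ℕ) : ℕ :=
  (if S (2 * k + 1) then 0 else 1) + (if k = 0 then 0 else 1)

lemma dyckA_succ (S : ℕ → Prop) (hS : ∀ j, ¬ S (2 * j)) (s k : ℕ) :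
    dyckA S (s + 1) k = (if k = 0 then 0 else dyckA S s (k - 1))
      + bS S k * dyckA S s k + dyckA S s (k + 1) := by
  classical
  haveI h1 := finite_and (PathCond S (s + 1) k) (fun p => p (2 * s) = true)
  haveI h2 := finite_and (PathCond S (s + 1) k) (fun p => p (2 * s) = false)
  have step1 := card_split_bool (PathCond S (s + 1) k) (fun p => p (2 * s))
  have eTT := card_split_bool (fun p : ℕ → Bool => PathCond S (s + 1) k p ∧ p (2 * s) = true)
    (fun p => p (2 * s + 1))
  have eFF := card_split_bool (fun p : ℕ → Bool => PathCond S (s + 1) k p ∧ p (2 * s) = false)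
    (fun p => p (2 * s + 1))
  have assoc : ∀ (a b : Bool),
      Nat.card {p : ℕ → Bool // (PathCond S (s + 1) k p ∧ p (2 * s) = a) ∧ p (2 * s + 1) = b}
      = Nat.card {p : ℕ → Bool // PathCond S (s + 1) k p ∧ p (2 * s) = a ∧ p (2 * s + 1) = b} :=
    fun a b => Nat.card_congr (Equiv.subtypeEquivRight fun p => and_assoc)
  have hsplit : dyckA S (s + 1) k =
      Nat.card {p : ℕ → Bool // PathCond S (s + 1) k p ∧ p (2 * s) = true ∧ p (2 * s + 1) = true}
    + Nat.card {p : ℕ → Bool // PathCond S (s + 1) k p ∧ p (2 * s) = true ∧ p (2 * s + 1) = false}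
    + (Nat.card {p : ℕ → Bool // PathCond S (s + 1) k p ∧ p (2 * s) = false ∧ p (2 * s + 1) = true}
    + Nat.card {p : ℕ → Bool // PathCond S (s + 1) k p ∧ p (2 * s) = false ∧ p (2 * s + 1) = false}) := by
    rw [dyckA, step1, eTT, eFF, assoc, assoc, assoc, assoc]
  rw [hsplit,
    Nat.card_congr (buildEquiv S s k true true _ (k - 1) (fwdTT S s k) (bwdTT S s k hS)),
    Nat.card_congr (buildEquiv S s k true false _ k (fwdTF S s k) (bwdTF S s k hS)),
    Nat.card_congr (buildEquiv S s k false true _ k (fwdFT S s k) (bwdFT S s k hS)),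
    Nat.card_congr (buildEquiv S s k false false _ (k + 1) (fwdFF S s k) (bwdFF S s k hS)),
    card_guard, card_guard, card_guard, card_guard, if_pos trivial]
  have fold : ∀ k' : ℕ, Nat.card {x : ℕ → Bool // PathCond S s k' x} = dyckA S s k' :=
    fun _ => rfl
  rw [fold (k - 1), fold k, fold (k + 1)]
  rw [show bS S k = (if S (2 * k + 1) then 0 else 1) + (if k = 0 then 0 else 1) from rfl]
  clear step1 eTT eFF assoc hsplit fold h1 h2
  by_cases hk : k = 0 <;> by_cases hsk : S (2 * k + 1)
  · rw [if_neg (not_not_intro hsk), if_pos hsk, if_neg (not_not_intro hk),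
      if_neg (not_not_intro hk), if_pos hk, if_pos hk]
    omega
  · rw [if_pos hsk, if_neg hsk, if_neg (not_not_intro hk),
      if_neg (not_not_intro hk), if_pos hk, if_pos hk]
    omega
  · rw [if_neg (not_not_intro hsk), if_pos hsk, if_pos hk, if_pos hk, if_neg hk, if_neg hk]
    omega
  · rw [if_pos hsk, if_neg hsk, if_pos hk, if_pos hk, if_neg hk, if_neg hk]
    omega

lemma dyckA_zero (S : ℕ → Prop) (k : ℕ) : dyckA S 0 k = if k = 0 then 1 else 0 := by
  by_cases hk : k = 0
  · subst hk
    rw [if_pos rfl]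
    haveI : Unique {p : ℕ → Bool // PathCond S 0 0 p} := by
      refine ⟨⟨⟨fun _ => false, ?_, ?_, ?_, ?_⟩⟩, ?_⟩
      · intro i _; rfl
      · intro j hj
        have : j = 0 := by omega
        subst this
        simp [pathHeight]
      · simp [pathHeight]
      · intro i hi; omega
      · rintro ⟨p, hp⟩
        apply Subtype.ext
        funext i
        exact hp.1 i (by omega)
    exact Nat.card_unique
  · rw [if_neg hk]
    haveI : IsEmpty {p : ℕ → Bool // PathCond S 0 k p} := by
      refine ⟨fun x => hk ?_⟩
      have := x.2.2.2.1
      simp [pathHeight] at this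
      omega
    exact Nat.card_of_isEmpty




lemma dyckA_eq_wnat (S : ℕ → Prop) (hS : ∀ j, ¬ S (2 * j)) :
    ∀ s k, dyckA S s k = wnat (bS S) s k := by
  intro s
  induction s with
  | zero =>
    intro k
    rw [dyckA_zero, wnat_zero]
  | succ s ih =>
    intro k
    rw [dyckA_succ S hS s k, wnat_succ, ih (k - 1), ih k, ih (k + 1)]

lemma dyckCount_eq (S : ℕ → Prop) (s : ℕ) : dyckCount S s = dyckA S s 0 := by
  apply Nat.card_congr
  apply Equiv.subtypeEquivRight
  intro p
  constructor
  · rintro ⟨a, b, c, d⟩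
    exact ⟨a, b, by rw [c]; norm_num, d⟩
  · rintro ⟨a, b, c, d⟩
    exact ⟨a, b, by rw [c]; norm_num, d⟩

end Stmt13Aux

open Stmt13Aux in
/-- For any even `m ≥ 2` and any set `V ⊆ {1,…,m}` of odd numbers, every Hankel
determinant of the counting sequence of Dyck paths whose peak heights avoid the
union of the congruence classes of elements of `V` modulo `m` equals `1`. -/
theorem stmt13 (m : ℕ) (hm : 2 ≤ m) (hme : Even m) (V : Finset ℕ)
    (hVm : ↑V ⊆ Finset.Icc 1 m) (hVodd : ∀ v ∈ V, Odd v) (n : ℕ) (hn : 1 ≤ n) :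
    Matrix.det (Matrix.of fun i j : Fin n =>
        (dyckCount (fun k => 0 < k ∧ ∃ v ∈ V, k % m = v % m) ((i : ℕ) + (j : ℕ)) : ℤ))
      = 1 := by
  set Sfun : ℕ → Prop := fun k => 0 < k ∧ ∃ v ∈ V, k % m = v % m with hSfun
  have hS : ∀ j, ¬ Sfun (2 * j) := by
    rintro j ⟨hpos, v, hv, hmod⟩
    have hodd := hVodd v hv
    have hmem := Finset.mem_Icc.mp (hVm hv)
    have hv2 : v % 2 = 1 := Nat.odd_iff.mp hodd
    have hm2 : m % 2 = 0 := Nat.even_iff.mp hme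
    have hvm' : v < m := by omega
    rw [Nat.mod_eq_of_lt hvm'] at hmod
    have hdvd : (2 : ℕ) ∣ m := hme.two_dvd
    have h2 : 2 ∣ (2 * j) % m := (Nat.dvd_mod_iff hdvd).mpr ⟨j, rfl⟩
    rw [hmod] at h2
    omega
  have hd : ∀ s, ((dyckCount Sfun s : ℕ) : ℤ) = ((wnat (bS Sfun) s 0 : ℕ) : ℤ) := by
    intro s
    rw [dyckCount_eq, dyckA_eq_wnat Sfun hS]
  exact hankel_det (bS Sfun) n hn (fun s => ((dyckCount Sfun s : ℕ) : ℤ)) hd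
end

section
/- Define rational numbers T_1, ..., T_b by T_1 = 2 - t_1 and T_{j+1} = 2 - t_{j+1} - 1/T_j for a sequence of positive integers (t_1,...,t_b) such that all T_j are nonzero (an admissible sequence). Then for every 1 ≤ j ≤ b, the product T_1·T_2···T_j is an integer. -/
/-- For an admissible sequence `(t_1, …, t_b)` of positive integers, with dual
sequence `T_1 = 2 - t_1`, `T_{j+1} = 2 - t_{j+1} - 1/T_j`, all nonzero, every
partial product `T_1 · T_2 ⋯ T_j` (for `1 ≤ j ≤ b`) is an integer. -/
theorem stmt14 (b : ℕ) (t : ℕ → ℕ) (ht : ∀ j, 1 ≤ j → j ≤ b → 0 < t j)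
    (T : ℕ → ℚ)
    (hT1 : 1 ≤ b → T 1 = 2 - (t 1 : ℚ))
    (hTrec : ∀ j, 1 ≤ j → j + 1 ≤ b → T (j + 1) = 2 - (t (j + 1) : ℚ) - 1 / T j)
    (hTne : ∀ j, 1 ≤ j → j ≤ b → T j ≠ 0) :
    ∀ j, 1 ≤ j → j ≤ b → ∃ z : ℤ, ∏ k ∈ Finset.Icc 1 j, T k = (z : ℚ) := by
  -- strengthened statement: both P_j and P_{j-1} are integers
  have key : ∀ j, 1 ≤ j → j ≤ b →
      ∃ z w : ℤ, (∏ k ∈ Finset.Icc 1 j, T k) = (z : ℚ) ∧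
        (∏ k ∈ Finset.Icc 1 (j - 1), T k) = (w : ℚ) := by
    intro j
    induction j with
    | zero => intro h; omega
    | succ n ih =>
      intro _ hnb
      rcases Nat.eq_or_lt_of_le (Nat.one_le_iff_ne_zero.mpr (by omega) : 1 ≤ n + 1) with h1 | h1
      · -- n = 0, base case j = 1
        have hn : n = 0 := by omega
        subst hn
        refine ⟨2 - (t 1 : ℤ), 1, ?_, ?_⟩
        · simp [hT1 hnb]
        · simp
      · -- n ≥ 1
        have hn1 : 1 ≤ n := by omega
        obtain ⟨z, w, hz, hw⟩ := ih hn1 (by omega)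
        have hTn := hTne n hn1 (by omega)
        have hrec := hTrec n hn1 hnb
        have hsplit : (∏ k ∈ Finset.Icc 1 (n + 1), T k)
            = (∏ k ∈ Finset.Icc 1 n, T k) * T (n + 1) :=
          Finset.prod_Icc_succ_top (by omega) T
        have hsplit2 : (∏ k ∈ Finset.Icc 1 n, T k)
            = (∏ k ∈ Finset.Icc 1 (n - 1), T k) * T n := by
          have : n - 1 + 1 = n := by omega
          rw [← this, Finset.prod_Icc_succ_top (by omega) T, this]
        refine ⟨z * (2 - (t (n + 1) : ℤ)) - w, z, ?_, by simpa using hz⟩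
        rw [hsplit, hrec, hz]
        have : ((∏ k ∈ Finset.Icc 1 (n - 1), T k) : ℚ) = (z : ℚ) / T n := by
          rw [← hz, hsplit2, mul_div_assoc, div_self hTn, mul_one]
        field_simp
        push_cast
        rw [← hw, this]
        field_simp
  intro j h1 h2
  obtain ⟨z, w, hz, _⟩ := key j h1 h2
  exact ⟨z, hz⟩
end

section
/- Consider the integer recurrence d_0 = 0, d_1 = -1, d_{j+1} = d_j(2 - t_j) - d_{j-1} for 1 ≤ j ≤ ℓ-1, where (t_1,...,t_{ℓ-1}) is an admissible sequence of positive integers with dual sequence T_j = h(t_1,...,t_j). Then d_{j+1} = d_1·T_1·T_2···T_j for every 1 ≤ j ≤ ℓ-1. In particular, if (t_1,...,t_{ℓ-1}) is primitive (T_{ℓ-1} = 0 and T_j ≠ 0 for j < ℓ-1), then d_ℓ = 0 and d_j ≠ 0 for 1 ≤ j ≤ ℓ-1. -/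
/-- For the integer recurrence `d_0 = 0`, `d_1 = -1`,
`d_{j+1} = d_j(2 - t_j) - d_{j-1}` attached to an admissible sequence
`(t_1, …, t_{ℓ-1})` with dual sequence `(T_j)`, one has
`d_{j+1} = d_1 · T_1 ⋯ T_j` for `1 ≤ j ≤ ℓ-1`; in particular, if the sequence is
primitive (`T_{ℓ-1} = 0`), then `d_ℓ = 0` and `d_j ≠ 0` for `1 ≤ j ≤ ℓ-1`. -/
theorem stmt17 (ℓ : ℕ) (hℓ : 2 ≤ ℓ) (t : ℕ → ℕ)
    (ht : ∀ j, 1 ≤ j → j ≤ ℓ - 1 → 0 < t j)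
    (T : ℕ → ℚ)
    (hT1 : T 1 = 2 - (t 1 : ℚ))
    (hTrec : ∀ j, 1 ≤ j → j + 1 ≤ ℓ - 1 → T (j + 1) = 2 - (t (j + 1) : ℚ) - 1 / T j)
    (hTne : ∀ j, 1 ≤ j → j ≤ ℓ - 2 → T j ≠ 0)
    (d : ℕ → ℤ) (hd0 : d 0 = 0) (hd1 : d 1 = -1)
    (hdrec : ∀ j, 1 ≤ j → j ≤ ℓ - 1 → d (j + 1) = d j * (2 - (t j : ℤ)) - d (j - 1)) :
    (∀ j, 1 ≤ j → j ≤ ℓ - 1 →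
      (d (j + 1) : ℚ) = (d 1 : ℚ) * ∏ k ∈ Finset.Icc 1 j, T k) ∧
    (T (ℓ - 1) = 0 → d ℓ = 0 ∧ ∀ j, 1 ≤ j → j ≤ ℓ - 1 → d j ≠ 0) := by
  -- ratio lemma : d_{j+1} = d_j * T_j
  have key : ∀ j, 1 ≤ j → j ≤ ℓ - 1 → (d (j + 1) : ℚ) = (d j : ℚ) * T j := by
    intro j hj1
    induction j, hj1 using Nat.le_induction with
    | base =>
      intro _
      have hr := hdrec 1 le_rfl (by omega)
      simp only [Nat.sub_self, hd0] at hr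
      rw [hr, hT1]
      push_cast
      ring
    | succ j hj ih =>
      intro hle
      have hTj : T j ≠ 0 := hTne j hj (by omega)
      have ihe := ih (by omega)
      have hr := hdrec (j + 1) (by omega) hle
      have hr' : (d (j + 2) : ℚ) = (d (j + 1) : ℚ) * (2 - (t (j + 1) : ℚ)) - (d j : ℚ) := by
        have : j + 1 - 1 = j := by omega
        rw [this] at hr
        exact_mod_cast hr
      rw [hr', hTrec j hj hle, ihe]
      field_simp
  have prod : ∀ j, 1 ≤ j → j ≤ ℓ - 1 →
      (d (j + 1) : ℚ) = (d 1 : ℚ) * ∏ k ∈ Finset.Icc 1 j, T k := by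
    intro j hj1
    induction j, hj1 using Nat.le_induction with
    | base => intro h; simpa using key 1 le_rfl h
    | succ j hj ih =>
      intro hle
      rw [key (j + 1) (by omega) hle, ih (by omega),
        Finset.prod_Icc_succ_top (by omega : 1 ≤ j + 1)]
      ring
  refine ⟨prod, fun hT0 => ⟨?_, ?_⟩⟩
  · have h := prod (ℓ - 1) (by omega) le_rfl
    have hℓ' : ℓ - 1 + 1 = ℓ := by omega
    rw [hℓ'] at h
    have : (∏ k ∈ Finset.Icc 1 (ℓ - 1), T k) = 0 :=
      Finset.prod_eq_zero (Finset.mem_Icc.mpr ⟨by omega, le_rfl⟩) hT0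
    rw [this, mul_zero] at h
    exact_mod_cast h
  · intro j hj1 hj2
    rcases eq_or_lt_of_le hj1 with h1 | h1
    · rw [← h1, hd1]; omega
    · have h := prod (j - 1) (by omega) (by omega)
      have hj' : j - 1 + 1 = j := by omega
      rw [hj'] at h
      have hprod : (∏ k ∈ Finset.Icc 1 (j - 1), T k) ≠ 0 := by
        apply Finset.prod_ne_zero_iff.mpr
        intro k hk
        rw [Finset.mem_Icc] at hk
        exact hTne k hk.1 (by omega)
      have : (d j : ℚ) ≠ 0 := by
        rw [h, hd1]
        push_cast
        simpa using hprod
      exact_mod_cast this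
end
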